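/- Let σ : [0,1] → S² ⊂ ℝ³ be a constant-speed minimizing geodesic on the unit sphere and let P ∈ S² be a unit vector, where the angular distance is d(x,y) = arccos⟨x,y⟩. Assume d(σ(t), P) < π/2 for all t ∈ [0,1]. Then the function t ↦ d(σ(t),P)² + 2·cos(d(σ(t),P)) is convex on [0,1]. -/

import Mathlib

open scoped RealInnerProductSpace

noncomputable def sphereDist (x y : EuclideanSpace ℝ (Fin 3)) : ℝ :=
  Real.arccos ⟪x, y⟫

open Real Set


lemma convexOn_congr' {s : Set ℝ} {f g : ℝ → ℝ} (hf : ConvexOn ℝ s f)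
    (h : ∀ x ∈ s, f x = g x) : ConvexOn ℝ s g := by
  refine ⟨hf.1, fun x hx y hy a b ha hb hab => ?_⟩
  have hm := hf.1 hx hy ha hb hab
  simp only [smul_eq_mul] at *
  rw [← h _ hx, ← h _ hy, ← h _ hm]
  exact hf.2 hx hy ha hb hab

lemma aux_fconv : ConvexOn ℝ (Set.Ici (0:ℝ)) (fun x => x ^ 2 + 2 * Real.cos x) := by
  have hder : ∀ x : ℝ, HasDerivAt (fun x => x ^ 2 + 2 * Real.cos x) (2 * x - 2 * Real.sin x) x := by
    intro x
    have h1 := hasDerivAt_pow 2 x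
    have h2 := (Real.hasDerivAt_cos x).const_mul 2
    have := h1.add h2
    refine this.congr_deriv (Eq.symm ?_)
    push_cast
    ring
  have hder2 : ∀ x : ℝ, HasDerivAt (fun x => 2 * x - 2 * Real.sin x) (2 - 2 * Real.cos x) x := by
    intro x
    have h1 := (hasDerivAt_id x).const_mul 2
    have h2 := (Real.hasDerivAt_sin x).const_mul 2
    have := h1.sub h2
    refine this.congr_deriv (Eq.symm ?_)
    ring
  refine convexOn_of_hasDerivWithinAt2_nonneg (convex_Ici 0) ?_
    (f' := fun x => 2 * x - 2 * Real.sin x) (f'' := fun x => 2 - 2 * Real.cos x)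
    (fun x _ => (hder x).hasDerivWithinAt) (fun x _ => (hder2 x).hasDerivWithinAt) ?_
  · exact (Continuous.continuousOn (by continuity))
  · intro x _
    nlinarith [Real.cos_le_one x]

lemma aux_fmono : MonotoneOn (fun x : ℝ => x ^ 2 + 2 * Real.cos x) (Set.Ici (0:ℝ)) := by
  have hder : ∀ x : ℝ, HasDerivAt (fun x => x ^ 2 + 2 * Real.cos x) (2 * x - 2 * Real.sin x) x := by
    intro x
    have h1 := hasDerivAt_pow 2 x
    have h2 := (Real.hasDerivAt_cos x).const_mul 2
    have := h1.add h2
    refine this.congr_deriv (Eq.symm ?_)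
    push_cast
    ring
  refine monotoneOn_of_hasDerivWithinAt_nonneg (convex_Ici 0) (Continuous.continuousOn (by continuity))
    (f' := fun x => 2 * x - 2 * Real.sin x) (fun x _ => (hder x).hasDerivWithinAt) ?_
  intro x hx
  rw [interior_Ici] at hx
  have : Real.sin x ≤ x := Real.sin_le (le_of_lt hx)
  linarith

lemma aux_comp {s : Set ℝ} {r : ℝ → ℝ} (hr : ConvexOn ℝ s r) (h0 : ∀ x ∈ s, 0 ≤ r x) :
    ConvexOn ℝ s (fun t => (r t) ^ 2 + 2 * Real.cos (r t)) := by
  refine ⟨hr.1, fun x hx y hy a b ha hb hab => ?_⟩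
  simp only [smul_eq_mul]
  have hmem : a * x + b * y ∈ s := by
    have := hr.1 hx hy ha hb hab; simpa using this
  have h1 : r (a * x + b * y) ≤ a * r x + b * r y := by
    have := hr.2 hx hy ha hb hab; simpa using this
  have hx0 : (0:ℝ) ≤ r x := h0 x hx
  have hy0 : (0:ℝ) ≤ r y := h0 y hy
  have hcomb0 : (0:ℝ) ≤ a * r x + b * r y := by positivity
  have hm := aux_fmono (Set.mem_Ici.2 (h0 _ hmem)) (Set.mem_Ici.2 hcomb0) h1
  have hc := aux_fconv.2 (Set.mem_Ici.2 hx0) (Set.mem_Ici.2 hy0) ha hb hab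
  simp only [smul_eq_mul] at hc
  calc (r (a * x + b * y)) ^ 2 + 2 * Real.cos (r (a * x + b * y))
      ≤ (a * r x + b * r y) ^ 2 + 2 * Real.cos (a * r x + b * r y) := hm
    _ ≤ a * ((r x) ^ 2 + 2 * Real.cos (r x)) + b * ((r y) ^ 2 + 2 * Real.cos (r y)) := hc

lemma aux_absconv (L φ : ℝ) : ConvexOn ℝ (Set.Icc (0:ℝ) 1) (fun t => |L * t - φ|) := by
  refine ⟨convex_Icc _ _, fun x _ y _ a b ha hb hab => ?_⟩
  simp only [smul_eq_mul]
  have key : L * (a * x + b * y) - φ = a * (L * x - φ) + b * (L * y - φ) := by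
    linear_combination φ * hab
  rw [key]
  calc |a * (L * x - φ) + b * (L * y - φ)|
      ≤ |a * (L * x - φ)| + |b * (L * y - φ)| := abs_add_le _ _
    _ = a * |L * x - φ| + b * |L * y - φ| := by
        rw [abs_mul, abs_mul, abs_of_nonneg ha, abs_of_nonneg hb]

lemma aux_rconv (a b L : ℝ) (hR : a ^ 2 + b ^ 2 < 1)
    (hpos : ∀ t ∈ Set.Icc (0:ℝ) 1, 0 < a * Real.cos (L * t) + b * Real.sin (L * t)) :
    ConvexOn ℝ (Set.Icc (0:ℝ) 1)
      (fun t => Real.arccos (a * Real.cos (L * t) + b * Real.sin (L * t))) := by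
  set c : ℝ → ℝ := fun t => a * Real.cos (L * t) + b * Real.sin (L * t) with hc_def
  set d : ℝ → ℝ := fun t => (b * Real.cos (L * t) - a * Real.sin (L * t)) * L with hd_def
  have hc2 : ∀ t, (c t) ^ 2 ≤ a ^ 2 + b ^ 2 := by
    intro t
    have h1 := Real.sin_sq_add_cos_sq (L * t)
    simp only [hc_def]
    nlinarith [sq_nonneg (a * Real.sin (L * t) - b * Real.cos (L * t))]
  have hclt : ∀ t, (c t) ^ 2 < 1 := fun t => lt_of_le_of_lt (hc2 t) hR
  have hsub : ∀ t, 0 < 1 - (c t) ^ 2 := fun t => by nlinarith [hclt t]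
  have hcne1 : ∀ t, c t ≠ 1 := by intro t h; nlinarith [hclt t]
  have hcnem1 : ∀ t, c t ≠ -1 := by intro t h; nlinarith [hclt t]
  set s : ℝ → ℝ := fun t => Real.sqrt (1 - (c t) ^ 2) with hs_def
  have hspos : ∀ t, 0 < s t := fun t => Real.sqrt_pos.2 (hsub t)
  have hssq : ∀ t, (s t) ^ 2 = 1 - (c t) ^ 2 := fun t => Real.sq_sqrt (le_of_lt (hsub t))
  have hd2 : ∀ t, (d t) ^ 2 = L ^ 2 * (a ^ 2 + b ^ 2) - L ^ 2 * (c t) ^ 2 := by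
    intro t
    have h1 := Real.sin_sq_add_cos_sq (L * t)
    simp only [hd_def, hc_def]
    linear_combination (L ^ 2 * (a ^ 2 + b ^ 2)) * h1
  -- derivative of c
  have hlin : ∀ t : ℝ, HasDerivAt (fun t : ℝ => L * t) L t := by
    intro t
    simpa using (hasDerivAt_id t).const_mul L
  have hcd : ∀ t, HasDerivAt c (d t) t := by
    intro t
    have h1 : HasDerivAt (fun t => Real.cos (L * t)) (-Real.sin (L * t) * L) t :=
      (Real.hasDerivAt_cos (L * t)).comp t (hlin t)
    have h2 : HasDerivAt (fun t => Real.sin (L * t)) (Real.cos (L * t) * L) t :=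
      (Real.hasDerivAt_sin (L * t)).comp t (hlin t)
    have := (h1.const_mul a).add (h2.const_mul b)
    refine this.congr_deriv (Eq.symm ?_)
    simp only [hd_def]; ring
  have hdd : ∀ t, HasDerivAt d (-(L ^ 2) * c t) t := by
    intro t
    have h1 : HasDerivAt (fun t => Real.cos (L * t)) (-Real.sin (L * t) * L) t :=
      (Real.hasDerivAt_cos (L * t)).comp t (hlin t)
    have h2 : HasDerivAt (fun t => Real.sin (L * t)) (Real.cos (L * t) * L) t :=
      (Real.hasDerivAt_sin (L * t)).comp t (hlin t)
    have := ((h1.const_mul b).sub (h2.const_mul a)).mul_const L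
    refine this.congr_deriv (Eq.symm ?_)
    simp only [hc_def]; ring
  -- derivative of s
  have hsd : ∀ t, HasDerivAt s (-(c t * d t) / s t) t := by
    intro t
    have h1 : HasDerivAt (fun t => 1 - (c t) ^ 2) (-(2 * c t * d t)) t := by
      have := ((hcd t).pow 2).const_sub 1
      refine this.congr_deriv (Eq.symm ?_)
      push_cast; ring
    have h2 := (Real.hasDerivAt_sqrt (ne_of_gt (hsub t))).comp t h1
    refine h2.congr_deriv (Eq.symm ?_)
    have h4 : Real.sqrt (1 - c t ^ 2) ≠ 0 := ne_of_gt (hspos t)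
    simp only [hs_def]
    field_simp
  -- first derivative of r
  set r1 : ℝ → ℝ := fun t => -(d t) / s t with hr1_def
  have hrd : ∀ t, HasDerivAt (fun t => Real.arccos (c t)) (r1 t) t := by
    intro t
    have := (Real.hasDerivAt_arccos (hcnem1 t) (hcne1 t)).comp t (hcd t)
    refine this.congr_deriv (Eq.symm ?_)
    simp only [hr1_def, hs_def]
    field_simp
  -- second derivative
  set r2 : ℝ → ℝ := fun t => (L ^ 2 * c t * (1 - (a ^ 2 + b ^ 2))) / (s t) ^ 3 with hr2_def
  have hrd2 : ∀ t, HasDerivAt r1 (r2 t) t := by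
    intro t
    have h1 := ((hdd t).neg.div (hsd t) (ne_of_gt (hspos t)))
    refine h1.congr_deriv (Eq.symm ?_)
    simp only [hr2_def, Pi.neg_apply]
    have h2 := hssq t
    have h3 := hd2 t
    have h4 := ne_of_gt (hspos t)
    clear_value c d s
    field_simp
    linear_combination (c t) * h3 - (L ^ 2 * c t) * h2
  -- conclude
  refine convexOn_of_hasDerivWithinAt2_nonneg (convex_Icc 0 1) ?_
    (f' := r1) (f'' := r2) (fun x _ => (hrd x).hasDerivWithinAt)
    (fun x _ => (hrd2 x).hasDerivWithinAt) ?_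
  · have hcc : Continuous c := by
      simp only [hc_def]; fun_prop
    exact (Real.continuous_arccos.comp hcc).continuousOn
  · intro x hx
    rw [interior_Icc] at hx
    have hcx : 0 < c x := hpos x (Set.mem_Icc.2 ⟨le_of_lt hx.1, le_of_lt hx.2⟩)
    simp only [hr2_def]
    have h5 : (0:ℝ) < (s x) ^ 3 := pow_pos (hspos x) 3
    have h6 : 0 ≤ 1 - (a ^ 2 + b ^ 2) := by linarith
    exact div_nonneg (mul_nonneg (mul_nonneg (sq_nonneg L) (le_of_lt hcx)) h6) (le_of_lt h5)


/-- Along a constant-speed minimizing geodesic `σ` on the unit sphere staying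
within distance `< π/2` of `P`, the function
`t ↦ d(σ(t),P)² + 2·cos(d(σ(t),P))` is convex on `[0,1]`. -/
theorem statement7 (σ : ℝ → EuclideanSpace ℝ (Fin 3))
    (P : EuclideanSpace ℝ (Fin 3)) (L : ℝ) (hL : L < Real.pi)
    (hσ : ∀ t ∈ Set.Icc (0:ℝ) 1, ‖σ t‖ = 1) (hP : ‖P‖ = 1)
    (hgeo : ∀ s ∈ Set.Icc (0:ℝ) 1, ∀ t ∈ Set.Icc (0:ℝ) 1,
      sphereDist (σ s) (σ t) = |s - t| * L)
    (hclose : ∀ t ∈ Set.Icc (0:ℝ) 1, sphereDist (σ t) P < Real.pi / 2) :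
    ConvexOn ℝ (Set.Icc (0:ℝ) 1)
      (fun t => sphereDist (σ t) P ^ 2 + 2 * Real.cos (sphereDist (σ t) P)) := by
  have h0 : (0:ℝ) ∈ Set.Icc (0:ℝ) 1 := by norm_num
  have h1 : (1:ℝ) ∈ Set.Icc (0:ℝ) 1 := by norm_num
  have hL0 : 0 ≤ L := by
    have h2 : (0:ℝ) ≤ sphereDist (σ 0) (σ 1) := Real.arccos_nonneg _
    rw [hgeo 0 h0 1 h1] at h2
    norm_num at h2
    exact h2
  have hst : ∀ s ∈ Set.Icc (0:ℝ) 1, ∀ t ∈ Set.Icc (0:ℝ) 1,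
      ⟪σ s, σ t⟫ = Real.cos (L * (s - t)) := by
    intro s hs t ht
    have hb : |⟪σ s, σ t⟫| ≤ 1 := by
      have := abs_real_inner_le_norm (σ s) (σ t)
      rwa [hσ s hs, hσ t ht, one_mul] at this
    have hgg := hgeo s hs t ht
    unfold sphereDist at hgg
    have h2 : ⟪σ s, σ t⟫ = Real.cos (|s - t| * L) := by
      rw [← hgg, Real.cos_arccos (neg_abs_le _ |>.trans' (by linarith [abs_le.1 hb |>.1]))
        (le_of_abs_le hb)]
    rw [h2, show |s - t| * L = |L * (s - t)| by rw [abs_mul, abs_of_nonneg hL0]; ring,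
      Real.cos_abs]
  rcases hL0.lt_or_eq with hLpos | hLzero
  · -- 0 < L
    have hsL : 0 < Real.sin L := Real.sin_pos_of_pos_of_lt_pi hLpos hL
    have hsLne : Real.sin L ≠ 0 := ne_of_gt hsL
    set B : EuclideanSpace ℝ (Fin 3) := (Real.sin L)⁻¹ • (σ 1 - Real.cos L • σ 0) with hB_def
    have huu : ⟪σ 0, σ 0⟫ = 1 := by
      rw [real_inner_self_eq_norm_sq, hσ 0 h0]; norm_num
    have hvv : ⟪σ 1, σ 1⟫ = 1 := by
      rw [real_inner_self_eq_norm_sq, hσ 1 h1]; norm_num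
    have huv : ⟪σ 0, σ 1⟫ = Real.cos L := by
      have := hst 0 h0 1 h1
      rwa [show L * ((0:ℝ) - 1) = -L by ring, Real.cos_neg] at this
    have hvu : ⟪σ 1, σ 0⟫ = Real.cos L := by
      have := hst 1 h1 0 h0
      rwa [show L * ((1:ℝ) - 0) = L by ring] at this
    have htu : ∀ t ∈ Set.Icc (0:ℝ) 1, ⟪σ t, σ 0⟫ = Real.cos (L * t) := by
      intro t ht
      have := hst t ht 0 h0
      rwa [show L * (t - 0) = L * t by ring] at this
    have hut : ∀ t ∈ Set.Icc (0:ℝ) 1, ⟪σ 0, σ t⟫ = Real.cos (L * t) := by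
      intro t ht
      rw [real_inner_comm]; exact htu t ht
    have htv : ∀ t ∈ Set.Icc (0:ℝ) 1, ⟪σ t, σ 1⟫ = Real.cos (L * t - L) := by
      intro t ht
      have := hst t ht 1 h1
      rwa [show L * (t - 1) = L * t - L by ring] at this
    have hvt : ∀ t ∈ Set.Icc (0:ℝ) 1, ⟪σ 1, σ t⟫ = Real.cos (L * t - L) := by
      intro t ht
      rw [real_inner_comm]; exact htv t ht
    have hsigma : ∀ t ∈ Set.Icc (0:ℝ) 1,
        σ t = Real.cos (L * t) • σ 0 + Real.sin (L * t) • B := by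
      intro t ht
      have htt : ⟪σ t, σ t⟫ = 1 := by
        rw [real_inner_self_eq_norm_sq, hσ t ht]; norm_num
      have hw : ⟪σ t - (Real.cos (L * t) • σ 0 + Real.sin (L * t) • B),
          σ t - (Real.cos (L * t) • σ 0 + Real.sin (L * t) • B)⟫ = 0 := by
        simp only [hB_def, inner_sub_left, inner_sub_right, inner_add_left, inner_add_right,
          real_inner_smul_left, real_inner_smul_right]
        rw [htt, huu, hvv, huv, hvu, htu t ht, hut t ht, htv t ht, hvt t ht]
        rw [Real.cos_sub (L * t) L]
        have hpy := Real.sin_sq_add_cos_sq L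
        have hpy2 := Real.sin_sq_add_cos_sq (L * t)
        field_simp
        linear_combination (-(Real.sin (L * t) ^ 2)) * hpy - (Real.sin L ^ 2) * hpy2
      have := inner_self_eq_zero.1 hw
      rw [sub_eq_zero] at this
      exact this
    set a : ℝ := ⟪σ 0, P⟫ with ha_def
    set b : ℝ := ⟪B, P⟫ with hb_def
    have hcP : ∀ t ∈ Set.Icc (0:ℝ) 1,
        ⟪σ t, P⟫ = a * Real.cos (L * t) + b * Real.sin (L * t) := by
      intro t ht
      rw [hsigma t ht]
      simp only [inner_add_left, real_inner_smul_left]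
      ring
    have huB : ⟪σ 0, B⟫ = 0 := by
      simp only [hB_def, inner_sub_right, real_inner_smul_right]
      rw [huv, huu]
      ring
    have hBu : ⟪B, σ 0⟫ = 0 := by rw [real_inner_comm]; exact huB
    have hBB : ⟪B, B⟫ = 1 := by
      simp only [hB_def, inner_sub_left, inner_sub_right, real_inner_smul_left,
        real_inner_smul_right]
      rw [huu, hvv, huv, hvu]
      have hpy := Real.sin_sq_add_cos_sq L
      field_simp
      nlinarith [hpy]
    have hPP : ⟪P, P⟫ = 1 := by
      rw [real_inner_self_eq_norm_sq, hP]; norm_num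
    have hab : a ^ 2 + b ^ 2 ≤ 1 := by
      have hnn : (0:ℝ) ≤ ⟪P - (a • σ 0 + b • B), P - (a • σ 0 + b • B)⟫ :=
        real_inner_self_nonneg
      have hPu : ⟪P, σ 0⟫ = a := by rw [real_inner_comm]
      have hPB : ⟪P, B⟫ = b := by rw [real_inner_comm]
      simp only [inner_sub_left, inner_sub_right, inner_add_left, inner_add_right,
        real_inner_smul_left, real_inner_smul_right] at hnn
      rw [hPP, hPu, hPB, huu, hBB, huB, hBu, ← ha_def, ← hb_def] at hnn
      nlinarith [hnn]
    have hcpos : ∀ t ∈ Set.Icc (0:ℝ) 1,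
        0 < a * Real.cos (L * t) + b * Real.sin (L * t) := by
      intro t ht
      have hcl := hclose t ht
      unfold sphereDist at hcl
      have := Real.arccos_lt_pi_div_two.mp hcl
      rwa [hcP t ht] at this
    clear_value B a b
    have hrconv : ConvexOn ℝ (Set.Icc (0:ℝ) 1)
        (fun t => Real.arccos (a * Real.cos (L * t) + b * Real.sin (L * t))) := by
      rcases hab.lt_or_eq with hR | hR
      · exact aux_rconv a b L hR hcpos
      · have ha0 : 0 < a := by
          have := hcpos 0 h0
          simpa using this
        have hb1 : b < 1 := by nlinarith
        have hbm1 : -1 ≤ b := by nlinarith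
        set φ := Real.arcsin b with hφ_def
        have hsφ : Real.sin φ = b := Real.sin_arcsin hbm1 (le_of_lt hb1)
        have hcφ : Real.cos φ = a := by
          rw [hφ_def, Real.cos_arcsin, show 1 - b ^ 2 = a ^ 2 by linarith]
          exact Real.sqrt_sq ha0.le
        have hcid : ∀ t : ℝ, a * Real.cos (L * t) + b * Real.sin (L * t)
            = Real.cos (L * t - φ) := by
          intro t
          rw [Real.cos_sub, hsφ, hcφ]
          ring
        have hφlt : φ < Real.pi / 2 := Real.arcsin_lt_pi_div_two.2 hb1
        have hφge : -(Real.pi / 2) ≤ φ := Real.neg_pi_div_two_le_arcsin b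
        have hθ : ∀ t ∈ Set.Icc (0:ℝ) 1, |L * t - φ| < Real.pi / 2 := by
          intro t ht
          rw [abs_lt]
          constructor
          · have : 0 ≤ L * t := mul_nonneg hL0 ht.1
            linarith
          · by_contra hcon
            push_neg at hcon
            have hcont : ContinuousOn (fun x : ℝ => L * x - φ) (Set.Icc 0 t) :=
              (Continuous.continuousOn (by fun_prop))
            have hmem : Real.pi / 2 ∈ Set.Icc ((fun x : ℝ => L * x - φ) 0)
                ((fun x : ℝ => L * x - φ) t) := by
              constructor
              · simp only [mul_zero, zero_sub]
                linarith [Real.pi_pos]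
              · simpa using hcon
            obtain ⟨t', ht', heq⟩ := intermediate_value_Icc ht.1 hcont hmem
            have ht'm : t' ∈ Set.Icc (0:ℝ) 1 := ⟨ht'.1, le_trans ht'.2 ht.2⟩
            have hpos' := hcpos t' ht'm
            rw [hcid t', show L * t' - φ = Real.pi / 2 from heq, Real.cos_pi_div_two] at hpos'
            exact lt_irrefl 0 hpos'
        have harr : ∀ t ∈ Set.Icc (0:ℝ) 1,
            Real.arccos (a * Real.cos (L * t) + b * Real.sin (L * t)) = |L * t - φ| := by
          intro t ht
          rw [hcid t, ← Real.cos_abs,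
            Real.arccos_cos (abs_nonneg _) ((hθ t ht).le.trans (by linarith [Real.pi_pos]))]
        exact convexOn_congr' (aux_absconv L φ) (fun x hx => (harr x hx).symm)
    have hcomp := aux_comp hrconv (fun x _ => Real.arccos_nonneg _)
    refine convexOn_congr' hcomp (fun x hx => ?_)
    have hgform : sphereDist (σ x) P = Real.arccos (a * Real.cos (L * x) + b * Real.sin (L * x)) := by
      unfold sphereDist
      rw [hcP x hx]
    rw [hgform]
  · -- L = 0
    have hconst : ∀ t ∈ Set.Icc (0:ℝ) 1, σ t = σ 0 := by
      intro t ht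
      have := hst t ht 0 h0
      rw [← hLzero] at this
      norm_num at this
      exact (inner_eq_one_iff_of_norm_eq_one (hσ t ht) (hσ 0 h0)).1 this
    refine convexOn_congr'
      (convexOn_const (sphereDist (σ 0) P ^ 2 + 2 * Real.cos (sphereDist (σ 0) P))
        (convex_Icc 0 1)) (fun x hx => ?_)
    rw [hconst x hx]
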